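/- Error Locator Test: assume the Ordered-Degree Condition deg m_0 ≤ deg m_1 ≤ … ≤ deg m_{n-1}. Let a ∈ F[x] with deg a < K, let Y = a + E, and let t_H = ⌊(n−k)/2⌋. For a subset S ⊆ {0,…,n-1}, let G = ∏_{i∈S} m_i, let N_zero(G) be the number of indices j ∈ {0,…,n-1} with m_j dividing G, and set Z = (G·Y) mod M_n. Assume: (1) the number of indices i with E mod m_i ≠ 0 is at most t_H; (2) N_zero(G) ≤ t_H and deg G ≤ Σ_{i=n−t_H}^{n-1} deg m_i; (3) G divides Z; (4) deg Z − deg G < K. Then the error locator polynomial Λ_e = ∏_{i : E mod m_i ≠ 0} m_i divides G, and Z = G·a. -/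

import Mathlib

open Polynomial Finset
open scoped Classical

private lemma sum_le_sum_top_aux (d : ℕ → ℕ) (hd : Monotone d) :
    ∀ (c n : ℕ) (T : Finset ℕ), T ⊆ Finset.range n → T.card ≤ c →
      ∑ i ∈ T, d i ≤ ∑ i ∈ Finset.Ico (n - c) n, d i := by
  intro c
  induction c with
  | zero =>
    intro n T hT hc
    have : T = ∅ := Finset.card_eq_zero.mp (Nat.le_zero.mp hc)
    subst this; simp
  | succ c ih =>
    intro n T hT hc
    rcases T.eq_empty_or_nonempty with rfl | hne
    · simp
    · have htT : T.max' hne ∈ T := T.max'_mem hne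
      have htn : T.max' hne < n := Finset.mem_range.mp (hT htT)
      obtain ⟨nn, rfl⟩ : ∃ nn, n = nn + 1 := ⟨n - 1, by omega⟩
      set t := T.max' hne with ht
      have hsub : T.erase t ⊆ Finset.range nn := by
        intro x hx
        have hx1 := Finset.mem_of_mem_erase hx
        have hx2 : x ≠ t := Finset.ne_of_mem_erase hx
        have := T.le_max' x hx1
        exact Finset.mem_range.mpr (by omega)
      have hcard : (T.erase t).card ≤ c := by
        rw [Finset.card_erase_of_mem htT]; omega
      have h1 := ih nn (T.erase t) hsub hcard
      have hsplit : ∑ i ∈ T, d i = d t + ∑ i ∈ T.erase t, d i :=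
        (Finset.add_sum_erase T d htT).symm
      have hIco : ∑ i ∈ Finset.Ico (nn + 1 - (c + 1)) (nn + 1), d i
          = ∑ i ∈ Finset.Ico (nn - c) nn, d i + d nn := by
        have h2 : nn + 1 - (c + 1) = nn - c := by omega
        rw [h2, Finset.sum_Ico_succ_top (by omega)]
      have hdt : d t ≤ d nn := hd (by omega)
      linarith

theorem error_locator_test
    {F : Type*} [Field F] [DecidableEq F] (n : ℕ) (hn : 1 ≤ n)
    (m : Fin n → F[X])
    (hmonic : ∀ i, (m i).Monic)
    (hdeg : ∀ i, 1 ≤ (m i).natDegree)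
    (hcop : ∀ i j, i ≠ j → IsCoprime (m i) (m j))
    (k : ℕ) (hk1 : 1 ≤ k) (hkn : k ≤ n)
    (N K : ℕ)
    (hN : N = (∏ i, m i).natDegree)
    (hK : K = (∏ i ∈ Finset.univ.filter (fun i : Fin n => (i : ℕ) < k), m i).natDegree)
    (hord : ∀ i j : Fin n, i ≤ j → (m i).natDegree ≤ (m j).natDegree)
    (Mn : F[X]) (hMn : Mn = ∏ i, m i)
    (E : F[X]) (hE0 : E ≠ 0) (hEdeg : E.degree < Mn.degree)
    (a : F[X]) (ha : a.degree < (K : WithBot ℕ))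
    (tH : ℕ) (htH : tH = (n - k) / 2)
    (S : Finset (Fin n))
    (G : F[X]) (hG : G = ∏ i ∈ S, m i)
    (Z : F[X]) (hZ : Z = (G * (a + E)) %ₘ Mn)
    (h1 : (Finset.univ.filter (fun i : Fin n => E %ₘ m i ≠ 0)).card ≤ tH)
    (h2a : (Finset.univ.filter (fun j : Fin n => m j ∣ G)).card ≤ tH)
    (h2b : G.natDegree ≤ ∑ i ∈ Finset.univ.filter (fun i : Fin n => n - tH ≤ (i : ℕ)), (m i).natDegree)
    (h3 : G ∣ Z)
    (h4 : Z.natDegree < G.natDegree + K) :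
    (∏ i ∈ Finset.univ.filter (fun i : Fin n => E %ₘ m i ≠ 0), m i) ∣ G ∧ Z = G * a := by
  classical
  set d : Fin n → ℕ := fun i => (m i).natDegree with hd
  have hm0 : ∀ i, m i ≠ 0 := fun i => (hmonic i).ne_zero
  have hMnmonic : Mn.Monic := hMn ▸ monic_prod_of_monic _ _ (fun i _ => hmonic i)
  have hGmonic : G.Monic := hG ▸ monic_prod_of_monic _ _ (fun i _ => hmonic i)
  have hG0 : G ≠ 0 := hGmonic.ne_zero
  -- coprimality with G for indices outside S
  have hcopG : ∀ i : Fin n, i ∉ S → IsCoprime (m i) G := by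
    intro i hi
    rw [hG]
    exact IsCoprime.prod_right fun j hj => hcop i j (fun h => hi (h ▸ hj))
  have hdvdG : ∀ j : Fin n, m j ∣ G ↔ j ∈ S := by
    intro j
    constructor
    · intro hdvd
      by_contra hj
      have hu : IsUnit (m j) := (hcopG j hj).isUnit_of_dvd' dvd_rfl hdvd
      have := natDegree_eq_zero_of_isUnit hu
      have := hdeg j
      omega
    · intro hj; rw [hG]; exact Finset.dvd_prod_of_mem _ hj
  have hdvdMn : ∀ i : Fin n, m i ∣ Mn := fun i => hMn ▸ Finset.dvd_prod_of_mem _ (mem_univ i)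
  have hMnd : Mn ∣ (G * (a + E) - Z) := by
    rw [hZ, modByMonic_eq_sub_mul_div _ Mn]
    exact ⟨(G * (a + E)) /ₘ Mn, by ring⟩
  obtain ⟨W, hW⟩ := h3
  -- degree sums
  have hNsum : N = ∑ i, d i := by
    rw [hN, natDegree_prod _ _ (fun i _ => hm0 i)]
  have hKsum : K = ∑ i ∈ Finset.univ.filter (fun i : Fin n => (i : ℕ) < k), d i := by
    rw [hK, natDegree_prod _ _ (fun i _ => hm0 i)]
  have hK1 : 1 ≤ K := by
    rw [hKsum]
    have h0 : (⟨0, by omega⟩ : Fin n) ∈ Finset.univ.filter (fun i : Fin n => (i : ℕ) < k) := by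
      simp only [Finset.mem_filter, Finset.mem_univ, true_and]
      omega
    calc 1 ≤ d ⟨0, by omega⟩ := hdeg _
    _ ≤ _ := Finset.single_le_sum (f := d) (fun i _ => Nat.zero_le _) h0
  -- degree of W
  have hWdeg : W.degree < (K : WithBot ℕ) := by
    rcases eq_or_ne W 0 with rfl | hW0
    · rw [degree_zero]
      exact_mod_cast WithBot.bot_lt_coe K
    · have hZ0 : Z ≠ 0 := by rw [hW]; exact mul_ne_zero hG0 hW0
      have : Z.natDegree = G.natDegree + W.natDegree := by
        rw [hW, natDegree_mul hG0 hW0]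
      rw [degree_eq_natDegree hW0]
      exact_mod_cast (by omega : W.natDegree < K)
  have hWa : (W - a).degree < (K : WithBot ℕ) :=
    lt_of_le_of_lt (degree_sub_le _ _) (max_lt hWdeg ha)
  -- indices outside S with m i ∣ E give m i ∣ W - a
  have hdvdWa : ∀ i : Fin n, i ∉ S → m i ∣ E → m i ∣ (W - a) := by
    intro i hiS hiE
    have hA : m i ∣ G * (a + E) - Z := (hdvdMn i).trans hMnd
    have h2 : G * (a + E) - Z = G * (a - W) + G * E := by rw [hW]; ring
    have h3' : m i ∣ G * (a - W) :=
      (dvd_add_right (hiE.mul_left G)).mp (by rw [add_comm, ← h2]; exact hA)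
    have h4' : m i ∣ a - W := (hcopG i hiS).dvd_of_dvd_mul_left h3'
    rw [← neg_sub]
    exact h4'.neg_right
  set Sc : Finset (Fin n) := Finset.univ.filter (fun i => i ∉ S ∧ m i ∣ E) with hSc
  set Q : F[X] := ∏ i ∈ Sc, m i with hQ
  have hQmonic : Q.Monic := monic_prod_of_monic _ _ (fun i _ => hmonic i)
  have hQdvd : Q ∣ W - a := by
    apply Finset.prod_dvd_of_coprime
    · intro i _ j _ hij
      exact hcop i j hij
    · intro i hi
      rw [hSc, Finset.mem_filter] at hi
      exact hdvdWa i hi.2.1 hi.2.2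
  -- cardinality bounds
  have hcardS : S.card ≤ tH := by
    have : Finset.univ.filter (fun j : Fin n => m j ∣ G) = S := by
      ext j; simp [hdvdG j]
    rwa [this] at h2a
  have hcardB : (Finset.univ.filter (fun i : Fin n => ¬ m i ∣ E)).card ≤ tH := by
    have : Finset.univ.filter (fun i : Fin n => ¬ m i ∣ E)
        = Finset.univ.filter (fun i : Fin n => E %ₘ m i ≠ 0) := by
      ext i
      simp [Ne, modByMonic_eq_zero_iff_dvd (hmonic i)]
    rwa [this]
  have htH2 : 2 * tH ≤ n - k := by omega
  -- the complement of Sc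
  have hCsub : Scᶜ ⊆ S ∪ Finset.univ.filter (fun i : Fin n => ¬ m i ∣ E) := by
    intro i hi
    rw [Finset.mem_compl, hSc, Finset.mem_filter] at hi
    push_neg at hi
    by_cases hiS : i ∈ S
    · exact Finset.mem_union_left _ hiS
    · exact Finset.mem_union_right _ (by simp [hi (Finset.mem_univ i) hiS])
  have hcardC : Scᶜ.card ≤ 2 * tH := by
    calc Scᶜ.card ≤ (S ∪ Finset.univ.filter (fun i : Fin n => ¬ m i ∣ E)).card :=
          Finset.card_le_card hCsub
    _ ≤ S.card + (Finset.univ.filter (fun i : Fin n => ¬ m i ∣ E)).card :=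
          Finset.card_union_le _ _
    _ ≤ 2 * tH := by omega
  -- monotone extension of d to ℕ
  set dd : ℕ → ℕ := fun j => if h : j < n then d ⟨j, h⟩ else d ⟨n - 1, by omega⟩ with hdd
  have hddmono : Monotone dd := by
    intro x y hxy
    by_cases hy : y < n
    · have hx : x < n := lt_of_le_of_lt hxy hy
      simp only [hdd, dif_pos hx, dif_pos hy]
      exact hord _ _ hxy
    · by_cases hx : x < n
      · simp only [hdd, dif_pos hx, dif_neg hy]
        exact hord _ _ (Fin.mk_le_mk.mpr (by omega))
      · simp [hdd, dif_neg hx, dif_neg hy]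
  have hsum_conv : ∀ A : Finset (Fin n), ∑ i ∈ A, d i = ∑ j ∈ A.image Fin.val, dd j := by
    intro A
    rw [Finset.sum_image (fun x _ y _ h => Fin.val_injective h)]
    exact Finset.sum_congr rfl (fun i _ => by simp [hdd, i.isLt])
  -- bound the sum over the complement
  have hCbound : ∑ i ∈ Scᶜ, d i ≤ ∑ j ∈ Finset.Ico k n, dd j := by
    have hsub : (Scᶜ.image Fin.val) ⊆ Finset.range n := by
      intro j hj
      rw [Finset.mem_image] at hj
      obtain ⟨i, _, rfl⟩ := hj
      exact Finset.mem_range.mpr i.isLt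
    have hcard : (Scᶜ.image Fin.val).card ≤ n - k := by
      rw [Finset.card_image_of_injective _ Fin.val_injective]
      omega
    have := sum_le_sum_top_aux dd hddmono (n - k) n (Scᶜ.image Fin.val) hsub hcard
    rw [hsum_conv]
    have hnk : n - (n - k) = k := by omega
    rwa [hnk] at this
  -- the Ico sum equals the sum over high indices
  have himg : ((Finset.univ : Finset (Fin n)).filter (fun i : Fin n => ¬ ((i : ℕ) < k))).image Fin.val
      = Finset.Ico k n := by
    ext j
    constructor
    · intro hj
      obtain ⟨i, hi, rfl⟩ := Finset.mem_image.mp hj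
      have hi' := (Finset.mem_filter.mp hi).2
      exact Finset.mem_Ico.mpr ⟨by omega, i.isLt⟩
    · intro hj
      have hj' := Finset.mem_Ico.mp hj
      refine Finset.mem_image.mpr ⟨⟨j, hj'.2⟩, Finset.mem_filter.mpr ⟨Finset.mem_univ _, ?_⟩, rfl⟩
      simpa using Nat.not_lt.mpr hj'.1
  have hIcoEq : ∑ j ∈ Finset.Ico k n, dd j
      = ∑ i ∈ Finset.univ.filter (fun i : Fin n => ¬ ((i : ℕ) < k)), d i := by
    rw [hsum_conv, himg]
  have hNsplit : ∑ i ∈ Finset.univ.filter (fun i : Fin n => (i : ℕ) < k), d i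
      + ∑ i ∈ Finset.univ.filter (fun i : Fin n => ¬ ((i : ℕ) < k)), d i = N := by
    rw [hNsum]; exact Finset.sum_filter_add_sum_filter_not _ _ _
  have hScsplit : ∑ i ∈ Sc, d i + ∑ i ∈ Scᶜ, d i = N := by
    rw [hNsum]
    rw [← Finset.sum_add_sum_compl Sc d]
  -- K ≤ natDegree Q
  have hQnd : K ≤ Q.natDegree := by
    have hQd : Q.natDegree = ∑ i ∈ Sc, d i := natDegree_prod _ _ (fun i _ => hm0 i)
    have := hCbound
    rw [hIcoEq] at this
    omega
  -- conclude W = a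
  have hWa2 : W = a := by
    by_contra hne
    have hWane : W - a ≠ 0 := sub_ne_zero.mpr hne
    have hle : Q.degree ≤ (W - a).degree := degree_le_of_dvd hQdvd hWane
    have hQdeg : (K : WithBot ℕ) ≤ Q.degree := by
      rw [degree_eq_natDegree hQmonic.ne_zero]
      exact_mod_cast hQnd
    exact absurd (lt_of_le_of_lt (hQdeg.trans hle) hWa) (lt_irrefl _)
  have hZeq : Z = G * a := by rw [hW, hWa2]
  refine ⟨?_, hZeq⟩
  have hES : Finset.univ.filter (fun i : Fin n => E %ₘ m i ≠ 0) ⊆ S := by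
    intro i hi
    rw [Finset.mem_filter] at hi
    by_contra hiS
    have hA : m i ∣ G * (a + E) - Z := (hdvdMn i).trans hMnd
    have h2 : G * (a + E) - Z = G * E := by rw [hZeq]; ring
    have h3' : m i ∣ E := (hcopG i hiS).dvd_of_dvd_mul_left (h2 ▸ hA)
    exact hi.2 ((modByMonic_eq_zero_iff_dvd (hmonic i)).mpr h3')
  rw [hG]
  exact Finset.prod_dvd_prod_of_subset _ _ m hES
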